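/- For every B-DMC W with finite output alphabet, I(W) + Z(W) ≥ 1. -/

import Mathlib

open Finset Real

/-- A binary-input discrete memoryless channel (B-DMC): nonnegative entries
and each row (fixed input) sums to 1. -/
def IsBDMC {Y : Type*} [Fintype Y] (W : Y → ZMod 2 → ℝ) : Prop :=
  (∀ y x, 0 ≤ W y x) ∧ (∀ x, ∑ y, W y x = 1)

/-- Bhattacharyya parameter Z(W). -/
noncomputable def bhatt {Y : Type*} [Fintype Y] (W : Y → ZMod 2 → ℝ) : ℝ :=
  ∑ y, Real.sqrt (W y 0 * W y 1)

/-- Symmetric capacity I(W). -/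
noncomputable def symCap {Y : Type*} [Fintype Y] (W : Y → ZMod 2 → ℝ) : ℝ :=
  ∑ y, ∑ x : ZMod 2,
    (1 / 2) * W y x * Real.logb 2 (W y x / ((1 / 2) * (W y 0 + W y 1)))

noncomputable def gg (t : ℝ) : ℝ :=
  (1+t)/2 * Real.log (1+t) + (1-t)/2 * Real.log (1-t)
    + Real.log 2 * Real.sqrt (1-t^2) - Real.log 2

noncomputable def gg1 (t : ℝ) : ℝ :=
  (Real.log (1+t) - Real.log (1-t))/2 - Real.log 2 * (t / Real.sqrt (1-t^2))

noncomputable def gg2 (t : ℝ) : ℝ :=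
  (1-t^2)⁻¹ - Real.log 2 / ((1-t^2) * Real.sqrt (1-t^2))

lemma sq_pos_of_mem {t : ℝ} (ht : t ∈ Set.Ioo (-1:ℝ) 1) : 0 < 1 - t^2 := by
  nlinarith [ht.1, ht.2]

lemma hasDerivAt_sqrt_one_sub_sq {t : ℝ} (ht : t ∈ Set.Ioo (-1:ℝ) 1) :
    HasDerivAt (fun t : ℝ => Real.sqrt (1-t^2)) (-t / Real.sqrt (1-t^2)) t := by
  have h3 : 0 < 1 - t^2 := sq_pos_of_mem ht
  have hs : 0 < Real.sqrt (1-t^2) := Real.sqrt_pos.2 h3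
  have P : HasDerivAt (fun t:ℝ => 1 - t^2) (-(2*t)) t := by
    simpa using (hasDerivAt_pow 2 t).const_sub 1
  have := (Real.hasDerivAt_sqrt h3.ne').comp t P
  refine this.congr_deriv ?_
  field_simp

lemma hasDerivAt_gg {t : ℝ} (ht : t ∈ Set.Ioo (-1:ℝ) 1) : HasDerivAt gg (gg1 t) t := by
  have h1 : (0:ℝ) < 1 + t := by linarith [ht.1]
  have h2 : (0:ℝ) < 1 - t := by linarith [ht.2]
  have h3 : 0 < 1 - t^2 := sq_pos_of_mem ht
  have hs : 0 < Real.sqrt (1-t^2) := Real.sqrt_pos.2 h3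
  have A : HasDerivAt (fun t : ℝ => 1 + t) 1 t := by
    simpa using (hasDerivAt_id t).const_add 1
  have B : HasDerivAt (fun t : ℝ => 1 - t) (-1) t := by
    simpa using (hasDerivAt_id t).const_sub 1
  have LA : HasDerivAt (fun t:ℝ => Real.log (1+t)) (1/(1+t)) t := by
    simpa using A.log h1.ne'
  have LB : HasDerivAt (fun t:ℝ => Real.log (1-t)) (-1/(1-t)) t := by
    simpa using B.log h2.ne'
  have T1 : HasDerivAt (fun t:ℝ => (1+t)/2 * Real.log (1+t))
      (1/2 * Real.log (1+t) + (1+t)/2 * (1/(1+t))) t := by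
    simpa using (A.div_const 2).fun_mul LA
  have T2 : HasDerivAt (fun t:ℝ => (1-t)/2 * Real.log (1-t))
      ((-1)/2 * Real.log (1-t) + (1-t)/2 * (-1/(1-t))) t := by
    simpa using (B.div_const 2).fun_mul LB
  have T3 : HasDerivAt (fun t:ℝ => Real.log 2 * Real.sqrt (1-t^2))
      (Real.log 2 * (-t / Real.sqrt (1-t^2))) t :=
    (hasDerivAt_sqrt_one_sub_sq ht).const_mul _
  have := ((T1.add T2).add T3).sub_const (Real.log 2)
  refine this.congr_deriv ?_
  unfold gg1
  field_simp
  ring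

lemma hasDerivAt_gg1 {t : ℝ} (ht : t ∈ Set.Ioo (-1:ℝ) 1) : HasDerivAt gg1 (gg2 t) t := by
  have h1 : (0:ℝ) < 1 + t := by linarith [ht.1]
  have h2 : (0:ℝ) < 1 - t := by linarith [ht.2]
  have h3 : 0 < 1 - t^2 := sq_pos_of_mem ht
  have hs : 0 < Real.sqrt (1-t^2) := Real.sqrt_pos.2 h3
  have hsq : Real.sqrt (1-t^2) ^ 2 = 1 - t^2 := Real.sq_sqrt h3.le
  have A : HasDerivAt (fun t : ℝ => 1 + t) 1 t := by
    simpa using (hasDerivAt_id t).const_add 1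
  have B : HasDerivAt (fun t : ℝ => 1 - t) (-1) t := by
    simpa using (hasDerivAt_id t).const_sub 1
  have LA : HasDerivAt (fun t:ℝ => Real.log (1+t)) (1/(1+t)) t := by
    simpa using A.log h1.ne'
  have LB : HasDerivAt (fun t:ℝ => Real.log (1-t)) (-1/(1-t)) t := by
    simpa using B.log h2.ne'
  have Q : HasDerivAt (fun t:ℝ => t / Real.sqrt (1-t^2))
      ((1 * Real.sqrt (1-t^2) - t * (-t / Real.sqrt (1-t^2))) / (Real.sqrt (1-t^2))^2) t :=
    (hasDerivAt_id t).div (hasDerivAt_sqrt_one_sub_sq ht) hs.ne'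
  have := ((LA.sub LB).div_const 2).sub ((Q.const_mul (Real.log 2)))
  refine this.congr_deriv ?_
  unfold gg2
  rw [hsq]
  field_simp
  ring_nf
  rw [hsq]; ring

noncomputable def tcrit : ℝ := Real.sqrt (1 - Real.log 2 ^ 2)

lemma log2_lt_one : Real.log 2 < 1 := by
  have := Real.log_two_lt_d9; linarith

lemma tcrit_sq : tcrit ^ 2 = 1 - Real.log 2 ^ 2 := by
  have h : (0:ℝ) ≤ 1 - Real.log 2 ^ 2 := by
    nlinarith [Real.log_pos (by norm_num : (1:ℝ) < 2), log2_lt_one]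
  exact Real.sq_sqrt h

lemma tcrit_pos : 0 < tcrit := by
  apply Real.sqrt_pos.2
  nlinarith [Real.log_pos (by norm_num : (1:ℝ) < 2), log2_lt_one]

lemma tcrit_lt_one : tcrit < 1 := by
  have h1 : tcrit ^ 2 < 1 := by
    rw [tcrit_sq]; nlinarith [Real.log_pos (by norm_num : (1:ℝ) < 2)]
  nlinarith [tcrit_pos]

lemma gg_zero : gg 0 = 0 := by unfold gg; norm_num

lemma gg_one : gg 1 = 0 := by unfold gg; norm_num

lemma gg1_zero : gg1 0 = 0 := by unfold gg1; norm_num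

lemma gg2_nonneg {x : ℝ} (hx : x ∈ Set.Ioo (0:ℝ) tcrit) : 0 ≤ gg2 x := by
  have hx1 : x ∈ Set.Ioo (-1:ℝ) 1 := ⟨by linarith [hx.1], by linarith [hx.2, tcrit_lt_one]⟩
  have h3 : 0 < 1 - x^2 := sq_pos_of_mem hx1
  have hlog : 0 < Real.log 2 := Real.log_pos (by norm_num)
  have hsl : Real.log 2 ≤ Real.sqrt (1 - x^2) := by
    have hx2 : x^2 ≤ tcrit^2 := by nlinarith [hx.1, hx.2]
    rw [tcrit_sq] at hx2
    have : Real.log 2 ^ 2 ≤ 1 - x^2 := by linarith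
    calc Real.log 2 = Real.sqrt (Real.log 2 ^ 2) := (Real.sqrt_sq hlog.le).symm
    _ ≤ Real.sqrt (1 - x^2) := Real.sqrt_le_sqrt this
  have hs : 0 < Real.sqrt (1 - x^2) := lt_of_lt_of_le hlog hsl
  have key : Real.log 2 / ((1-x^2) * Real.sqrt (1-x^2)) ≤ (1-x^2)⁻¹ := by
    rw [div_le_iff₀ (by positivity : (0:ℝ) < (1-x^2) * Real.sqrt (1-x^2))]
    have h4 : (1-x^2)⁻¹ * ((1-x^2) * Real.sqrt (1-x^2)) = Real.sqrt (1-x^2) := by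
      field_simp
    rw [h4]; exact hsl
  unfold gg2
  linarith

lemma gg2_nonpos {x : ℝ} (hx : x ∈ Set.Ioo tcrit (1:ℝ)) : gg2 x ≤ 0 := by
  have hx1 : x ∈ Set.Ioo (-1:ℝ) 1 := ⟨by linarith [hx.1, tcrit_pos], hx.2⟩
  have h3 : 0 < 1 - x^2 := sq_pos_of_mem hx1
  have hlog : 0 < Real.log 2 := Real.log_pos (by norm_num)
  have hs : 0 < Real.sqrt (1 - x^2) := Real.sqrt_pos.2 h3
  have hsl : Real.sqrt (1 - x^2) ≤ Real.log 2 := by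
    have hx2 : tcrit^2 ≤ x^2 := by nlinarith [hx.1, tcrit_pos]
    rw [tcrit_sq] at hx2
    have h1x : 1 - x^2 ≤ Real.log 2 ^ 2 := by linarith
    calc Real.sqrt (1 - x^2) ≤ Real.sqrt (Real.log 2 ^ 2) := Real.sqrt_le_sqrt h1x
    _ = Real.log 2 := Real.sqrt_sq hlog.le
  have key : (1-x^2)⁻¹ ≤ Real.log 2 / ((1-x^2) * Real.sqrt (1-x^2)) := by
    rw [le_div_iff₀ (by positivity : (0:ℝ) < (1-x^2) * Real.sqrt (1-x^2))]
    have h4 : (1-x^2)⁻¹ * ((1-x^2) * Real.sqrt (1-x^2)) = Real.sqrt (1-x^2) := by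
      field_simp
    rw [h4]; exact hsl
  unfold gg2
  linarith

lemma gg_nonneg_left : ∀ t ∈ Set.Icc (0:ℝ) tcrit, 0 ≤ gg t := by
  have hsub : Set.Icc (0:ℝ) tcrit ⊆ Set.Ioo (-1:ℝ) 1 := fun x hx =>
    ⟨by linarith [hx.1], by linarith [hx.2, tcrit_lt_one]⟩
  have hsub' : Set.Ioo (0:ℝ) tcrit ⊆ Set.Ioo (-1:ℝ) 1 := fun x hx =>
    ⟨by linarith [hx.1], by linarith [hx.2, tcrit_lt_one]⟩
  have hmono1 : MonotoneOn gg1 (Set.Icc 0 tcrit) := by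
    apply monotoneOn_of_deriv_nonneg (convex_Icc _ _)
    · exact fun x hx => ((hasDerivAt_gg1 (hsub hx)).continuousAt).continuousWithinAt
    · rw [interior_Icc]
      exact fun x hx => ((hasDerivAt_gg1 (hsub' hx)).differentiableAt).differentiableWithinAt
    · rw [interior_Icc]
      intro x hx
      rw [(hasDerivAt_gg1 (hsub' hx)).deriv]
      exact gg2_nonneg hx
  have hgg1 : ∀ x ∈ Set.Icc (0:ℝ) tcrit, 0 ≤ gg1 x := by
    intro x hx
    have := hmono1 (Set.left_mem_Icc.2 tcrit_pos.le) hx hx.1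
    rwa [gg1_zero] at this
  have hmono : MonotoneOn gg (Set.Icc 0 tcrit) := by
    apply monotoneOn_of_deriv_nonneg (convex_Icc _ _)
    · exact fun x hx => ((hasDerivAt_gg (hsub hx)).continuousAt).continuousWithinAt
    · rw [interior_Icc]
      exact fun x hx => ((hasDerivAt_gg (hsub' hx)).differentiableAt).differentiableWithinAt
    · rw [interior_Icc]
      intro x hx
      rw [(hasDerivAt_gg (hsub' hx)).deriv]
      exact hgg1 x ⟨hx.1.le, hx.2.le⟩
  intro t ht
  have := hmono (Set.left_mem_Icc.2 tcrit_pos.le) ht ht.1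
  rwa [gg_zero] at this

lemma gg_continuous : Continuous gg := by
  have hgeq : gg = fun t => (1/2)*((1+t)*Real.log (1+t)) + (1/2)*((1-t)*Real.log (1-t))
      + Real.log 2 * Real.sqrt (1-t^2) - Real.log 2 := by
    funext t; unfold gg; ring
  have c1 : Continuous fun t:ℝ => (1+t) * Real.log (1+t) :=
    Real.continuous_mul_log.comp (by continuity)
  have c2 : Continuous fun t:ℝ => (1-t) * Real.log (1-t) :=
    Real.continuous_mul_log.comp (by continuity)
  have c3 : Continuous fun t:ℝ => Real.sqrt (1-t^2) :=
    Real.continuous_sqrt.comp (by continuity)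
  rw [hgeq]
  exact (((continuous_const.mul c1).add (continuous_const.mul c2)).add
    (continuous_const.mul c3)).sub continuous_const

lemma gg_concave_right : ConcaveOn ℝ (Set.Icc tcrit 1) gg := by
  have hsub' : Set.Ioo tcrit (1:ℝ) ⊆ Set.Ioo (-1:ℝ) 1 := fun x hx =>
    ⟨by linarith [hx.1, tcrit_pos], hx.2⟩
  have heq : Set.EqOn (deriv gg) gg1 (Set.Ioo tcrit 1) := fun x hx =>
    (hasDerivAt_gg (hsub' hx)).deriv
  apply concaveOn_of_deriv2_nonpos (convex_Icc _ _) gg_continuous.continuousOn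
  · rw [interior_Icc]
    exact fun x hx => ((hasDerivAt_gg (hsub' hx)).differentiableAt).differentiableWithinAt
  · rw [interior_Icc]
    apply DifferentiableOn.congr _ heq
    exact fun x hx => ((hasDerivAt_gg1 (hsub' hx)).differentiableAt).differentiableWithinAt
  · rw [interior_Icc]
    intro x hx
    have hev : deriv gg =ᶠ[nhds x] gg1 := by
      filter_upwards [IsOpen.mem_nhds isOpen_Ioo (hsub' hx)] with y hy
      exact (hasDerivAt_gg hy).deriv
    have : deriv (deriv gg) x = gg2 x := by
      rw [Filter.EventuallyEq.deriv_eq hev]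
      exact (hasDerivAt_gg1 (hsub' hx)).deriv
    simp only [Function.iterate_succ, Function.iterate_zero, Function.comp_apply, id_eq]
    rw [this]
    exact gg2_nonpos hx

lemma gg_nonneg : ∀ t ∈ Set.Icc (0:ℝ) 1, 0 ≤ gg t := by
  intro t ht
  rcases le_or_gt t tcrit with h | h
  · exact gg_nonneg_left t ⟨ht.1, h⟩
  · have hmem : t ∈ Set.Icc tcrit 1 := ⟨h.le, ht.2⟩
    have hseg : t ∈ segment ℝ tcrit (1:ℝ) := by
      rw [segment_eq_Icc (by linarith [tcrit_lt_one])]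
      exact hmem
    have := gg_concave_right.ge_on_segment (Set.left_mem_Icc.2 (by linarith [tcrit_lt_one]))
      (Set.right_mem_Icc.2 (by linarith [tcrit_lt_one])) hseg
    have h0 : 0 ≤ min (gg tcrit) (gg 1) := by
      rw [gg_one]
      exact le_min (gg_nonneg_left tcrit ⟨tcrit_pos.le, le_refl _⟩) (le_refl 0)
    linarith

lemma norm_ineq : ∀ t ∈ Set.Icc (0:ℝ) 1,
    1 ≤ (1+t)/2 * Real.logb 2 (1+t) + (1-t)/2 * Real.logb 2 (1-t) + Real.sqrt (1-t^2) := by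
  intro t ht
  have hg := gg_nonneg t ht
  have hlog : 0 < Real.log 2 := Real.log_pos (by norm_num)
  have key : (1+t)/2 * Real.logb 2 (1+t) + (1-t)/2 * Real.logb 2 (1-t)
      + Real.sqrt (1-t^2) - 1 = gg t / Real.log 2 := by
    unfold gg Real.logb
    field_simp
  have h2 : 0 ≤ gg t / Real.log 2 := div_nonneg hg hlog.le
  linarith

lemma key_ab' {a b : ℝ} (ha : 0 ≤ a) (hb : 0 ≤ b) (hba : b ≤ a) :
    (a+b)/2 ≤ 1/2*a*Real.logb 2 (a/(1/2*(a+b))) + 1/2*b*Real.logb 2 (b/(1/2*(a+b)))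
      + Real.sqrt (a*b) := by
  rcases eq_or_lt_of_le (by linarith : (0:ℝ) ≤ a + b) with h0 | hab
  · have ha0 : a = 0 := by linarith
    have hb0 : b = 0 := by linarith
    simp [ha0, hb0]
  set t := (a-b)/(a+b) with hteq
  have ht0 : 0 ≤ t := div_nonneg (by linarith) hab.le
  have ht1 : t ≤ 1 := by
    rw [hteq, div_le_one hab]; linarith
  have arg1 : a/(1/2*(a+b)) = 1 + t := by
    rw [hteq]; field_simp; ring
  have arg2 : b/(1/2*(a+b)) = 1 - t := by
    rw [hteq]; field_simp; ring
  have ha_eq : a = (a+b)/2 * (1+t) := by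
    rw [hteq]; field_simp; ring
  have hb_eq : b = (a+b)/2 * (1-t) := by
    rw [hteq]; field_simp; ring
  have hsqrt : Real.sqrt (a*b) = (a+b)/2 * Real.sqrt (1-t^2) := by
    have hab2 : a*b = ((a+b)/2)^2 * (1-t^2) := by
      rw [hteq]; field_simp; ring
    rw [hab2, Real.sqrt_mul (sq_nonneg _), Real.sqrt_sq (by positivity)]
  have hn := norm_ineq t ⟨ht0, ht1⟩
  have hpos : (0:ℝ) ≤ (a+b)/2 := by linarith
  have hmul := mul_le_mul_of_nonneg_left hn hpos
  rw [mul_one] at hmul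
  rw [arg1, arg2, hsqrt]
  have heq : (a+b)/2 * ((1+t)/2 * Real.logb 2 (1+t) + (1-t)/2 * Real.logb 2 (1-t)
      + Real.sqrt (1-t^2))
      = 1/2*a*Real.logb 2 (1+t) + 1/2*b*Real.logb 2 (1-t)
        + (a+b)/2 * Real.sqrt (1-t^2) := by
    linear_combination (-(Real.logb 2 (1+t))/2) * ha_eq + (-(Real.logb 2 (1-t))/2) * hb_eq
  linarith

lemma key_ab {a b : ℝ} (ha : 0 ≤ a) (hb : 0 ≤ b) :
    (a+b)/2 ≤ 1/2*a*Real.logb 2 (a/(1/2*(a+b))) + 1/2*b*Real.logb 2 (b/(1/2*(a+b)))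
      + Real.sqrt (a*b) := by
  rcases le_total b a with h | h
  · exact key_ab' ha hb h
  · have := key_ab' hb ha h
    rw [add_comm b a, mul_comm b a] at this
    linarith


lemma sum_zmod_two (f : ZMod 2 → ℝ) : ∑ x : ZMod 2, f x = f 0 + f 1 := by
  have h : (Finset.univ : Finset (ZMod 2)) = {0, 1} := by decide
  rw [h, Finset.sum_insert (by decide), Finset.sum_singleton]

/-- I(W) + Z(W) ≥ 1. -/
theorem symCap_add_bhatt_ge_one {Y : Type*} [Fintype Y]
    (W : Y → ZMod 2 → ℝ) (hW : IsBDMC W) :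
    1 ≤ symCap W + bhatt W := by
  obtain ⟨hnn, hsum⟩ := hW
  have hone : (1:ℝ) = ∑ y, (W y 0 + W y 1)/2 := by
    have h2 : ∑ y, (W y 0 + W y 1)/2 = (∑ y, W y 0 + ∑ y, W y 1)/2 := by
      rw [← Finset.sum_add_distrib, Finset.sum_div]
    rw [h2, hsum 0, hsum 1]
    norm_num
  refine le_trans (le_of_eq hone) ?_
  rw [symCap, bhatt, ← Finset.sum_add_distrib]
  apply Finset.sum_le_sum
  intro y _
  rw [sum_zmod_two]
  exact key_ab (hnn y 0) (hnn y 1)
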